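/- Discounting versus flow cost: define, as a function of the discount rate ρ ≥ 0, c̄₀(ρ) = (λ·(u_r^R − u_ℓ^R)·(u_ℓ^L − u_r^L) − ρ·(u_r^R·u_ℓ^L − u_ℓ^R·u_r^L))/((u_r^R − u_ℓ^R) + (u_ℓ^L − u_r^L)). Then the derivative dc̄₀/dρ = −(u_r^R·u_ℓ^L − u_ℓ^R·u_r^L)/((u_r^R − u_ℓ^R) + (u_ℓ^L − u_r^L)), and dc̄₀/dρ < 0 if and only if U(p) > 0 for every p ∈ [0,1]. -/
import Mathlib


set_option linter.unusedVariables false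

noncomputable section

def Ur (urR ulR urL ulL lam p : ℝ) : ℝ := p * urR + (1 - p) * urL

def Ul (urR ulR urL ulL lam p : ℝ) : ℝ := p * ulR + (1 - p) * ulL

def U (urR ulR urL ulL lam p : ℝ) : ℝ :=
  max (Ur urR ulR urL ulL lam p) (Ul urR ulR urL ulL lam p)

/-- The upper cost cutoff `c̄₀` as a function of the discount rate `ρ`. -/
def cbar0 (urR ulR urL ulL lam : ℝ) (rho : ℝ) : ℝ :=
  (lam * (urR - ulR) * (ulL - urL) - rho * (urR * ulL - ulR * urL))
    / ((urR - ulR) + (ulL - urL))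

/-- Discounting versus flow cost: `dc̄₀/dρ = −(u_r^R u_ℓ^L − u_ℓ^R u_r^L)/((u_r^R − u_ℓ^R)
+ (u_ℓ^L − u_r^L))`, and it is negative iff `U(p) > 0` for all `p ∈ [0,1]`. -/
theorem cbar_derivative_in_rho
    (urR ulR urL ulL lam : ℝ)
    (h_urR : urR > max 0 ulR) (h_ulL : ulL > max 0 urL)
    (h_lam : 0 < lam) :
    (∀ rho : ℝ, deriv (cbar0 urR ulR urL ulL lam) rho
      = -(urR * ulL - ulR * urL) / ((urR - ulR) + (ulL - urL)))
    ∧ (-(urR * ulL - ulR * urL) / ((urR - ulR) + (ulL - urL)) < 0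
        ↔ ∀ p ∈ Set.Icc (0 : ℝ) 1, 0 < U urR ulR urL ulL lam p) := by
  obtain ⟨h1, h2⟩ := max_lt_iff.mp h_urR
  obtain ⟨h3, h4⟩ := max_lt_iff.mp h_ulL
  set D : ℝ := (urR - ulR) + (ulL - urL) with hDdef
  set B : ℝ := urR * ulL - ulR * urL with hBdef
  have hD : 0 < D := by simp only [hDdef]; linarith
  have hDne : D ≠ 0 := ne_of_gt hD
  constructor
  · intro rho
    have hfun : cbar0 urR ulR urL ulL lam
        = fun r : ℝ => (-(B / D)) * r + lam * (urR - ulR) * (ulL - urL) / D := by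
      funext r
      simp only [cbar0, ← hDdef, ← hBdef]
      field_simp
      ring
    rw [hfun]
    have : HasDerivAt (fun r : ℝ => (-(B / D)) * r + lam * (urR - ulR) * (ulL - urL) / D)
        (-(B / D)) rho := by
      simpa using ((hasDerivAt_id rho).const_mul (-(B / D))).add_const
        (lam * (urR - ulR) * (ulL - urL) / D)
    rw [this.deriv, neg_div]
  · have hiff : -B / D < 0 ↔ 0 < B := by
      rw [div_neg_iff]
      constructor
      · rintro (⟨hb, hd⟩ | ⟨hb, hd⟩)
        · linarith
        · linarith
      · intro hb; right; constructor <;> linarith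
    rw [hiff]
    constructor
    · intro hB p hp
      obtain ⟨hp0, hp1⟩ := hp
      simp only [U, Ur, Ul, lt_max_iff]
      rcases le_or_gt (p * D) (ulL - urL) with hc | hc
      · right
        rcases le_or_gt ulL ulR with hs | hs
        · nlinarith [mul_nonneg hp0 (sub_nonneg.mpr hs)]
        · nlinarith [mul_nonneg (sub_nonneg.mpr hc) (sub_nonneg.mpr hs.le), hD, hB]
      · left
        rcases le_or_gt urR urL with hs | hs
        · nlinarith [mul_nonneg (sub_nonneg.mpr hp1) (sub_nonneg.mpr hs)]
        · nlinarith [mul_nonneg (sub_nonneg.mpr hc.le) (sub_nonneg.mpr hs.le), hD, hB]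
    · intro hU
      set pstar : ℝ := (ulL - urL) / D with hps
      have hmem : pstar ∈ Set.Icc (0 : ℝ) 1 := by
        constructor
        · exact div_nonneg (by linarith) hD.le
        · rw [div_le_one hD]; simp only [hDdef]; linarith
      have hUp := hU pstar hmem
      have hr : Ur urR ulR urL ulL lam pstar = B / D := by
        simp only [Ur, hps, hBdef]; field_simp; ring
      have hl : Ul urR ulR urL ulL lam pstar = B / D := by
        simp only [Ul, hps, hBdef]; field_simp; ring
      have : 0 < B / D := by
        simpa [U, hr, hl] using hUp
      exact (div_pos_iff_of_pos_right hD).mp this
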